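/- arXiv:1201.1062 — 2 statements merged into one kernel-verified Lean document; each statement's English description precedes it below -/
import Mathlib

section
/- Let A and B be finite-valued random variables such that the pair (A,B) is quasi-uniform. Then there exists a random variable W (on the same probability space, jointly distributed with A and B) such that H(W) = H(A|B) and H(A | B, W) = 0. -/
open scoped Classical BigOperators

/-- Probability of the event `X = a` under the mass function `p`. -/
noncomputable def dist {Ω : Type*} [Fintype Ω] (p : Ω → ℝ) {A : Type*} (X : Ω → A) (a : A) : ℝ :=
  ∑ ω ∈ Finset.univ.filter (fun ω => X ω = a), p ω

/-- The (finite) support of a random variable. -/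
noncomputable def supp {Ω : Type*} [Fintype Ω] (p : Ω → ℝ) {A : Type*} (X : Ω → A) : Finset A :=
  (Finset.univ.image X).filter (fun a => 0 < dist p X a)

/-- Shannon entropy (in bits) of a random variable. -/
noncomputable def entH {Ω : Type*} [Fintype Ω] (p : Ω → ℝ) {A : Type*} (X : Ω → A) : ℝ :=
  -∑ a ∈ Finset.univ.image X, dist p X a * Real.logb 2 (dist p X a)

/-- `p` is a probability mass function. -/
def IsProb {Ω : Type*} [Fintype Ω] (p : Ω → ℝ) : Prop :=
  (∀ ω, 0 ≤ p ω) ∧ ∑ ω, p ω = 1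

/-- `X` is uniformly distributed over its support. -/
def UniformOnSupport {Ω : Type*} [Fintype Ω] (p : Ω → ℝ) {A : Type*} (X : Ω → A) : Prop :=
  ∀ a ∈ supp p X, dist p X a = ((supp p X).card : ℝ)⁻¹

section Aux

variable {Ω : Type*} [Fintype Ω] {p : Ω → ℝ}

lemma dist_nonneg' (hp : ∀ ω, 0 ≤ p ω) {A : Type*} (X : Ω → A) (a : A) : 0 ≤ dist p X a :=
  Finset.sum_nonneg fun ω _ => hp ω

lemma mem_image_of_dist_pos {A : Type*} {X : Ω → A} {a : A} (h : 0 < dist p X a) :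
    a ∈ Finset.univ.image X := by
  obtain ⟨ω, hω⟩ := Finset.nonempty_of_sum_ne_zero (ne_of_gt h)
  exact Finset.mem_image.2 ⟨ω, Finset.mem_univ ω, (Finset.mem_filter.1 hω).2⟩

lemma mem_supp_iff {A : Type*} {X : Ω → A} {a : A} :
    a ∈ supp p X ↔ 0 < dist p X a := by
  constructor
  · intro h; exact (Finset.mem_filter.1 h).2
  · intro h; exact Finset.mem_filter.2 ⟨mem_image_of_dist_pos h, h⟩

lemma sum_dist (hp : IsProb p) {A : Type*} (X : Ω → A) :
    ∑ a ∈ Finset.univ.image X, dist p X a = 1 := by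
  rw [← hp.2]
  exact Finset.sum_fiberwise_of_maps_to
    (fun ω _ => Finset.mem_image_of_mem X (Finset.mem_univ ω)) p

lemma entH_of_uniform (hp : IsProb p) {A : Type*} (X : Ω → A) (k : ℕ)
    (hZ : ∀ a, dist p X a = 0 ∨ dist p X a = (k : ℝ)⁻¹) :
    entH p X = Real.logb 2 k := by
  have : ∀ a ∈ Finset.univ.image X,
      dist p X a * Real.logb 2 (dist p X a) = dist p X a * Real.logb 2 ((k:ℝ)⁻¹) := by
    intro a _
    rcases hZ a with h | h <;> rw [h] <;> simp
  rw [entH, Finset.sum_congr rfl this, ← Finset.sum_mul, sum_dist hp, one_mul,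
    Real.logb_inv, neg_neg]

lemma dist_comp {A C : Type*} (X : Ω → A) (f : A → C) (c : C) :
    dist p (fun ω => f (X ω)) c
      = ∑ a ∈ (Finset.univ.image X).filter (fun a => f a = c), dist p X a := by
  rw [_root_.dist]
  rw [← Finset.sum_fiberwise_of_maps_to (t := (Finset.univ.image X).filter (fun a => f a = c))
      (g := X) (f := p) (fun ω hω => by
        have h2 := (Finset.mem_filter.1 hω).2
        exact Finset.mem_filter.2 ⟨Finset.mem_image_of_mem X (Finset.mem_univ ω), h2⟩)]
  apply Finset.sum_congr rfl
  intro a ha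
  have hfa : f a = c := (Finset.mem_filter.1 ha).2
  rw [_root_.dist]
  apply Finset.sum_congr _ (fun _ _ => rfl)
  ext ω
  simp only [Finset.mem_filter, Finset.mem_univ, true_and]
  constructor
  · rintro ⟨_, h⟩; exact h
  · intro h; exact ⟨by rw [h, hfa], h⟩

lemma dist_comp' (hp0 : ∀ ω, 0 ≤ p ω) {A C : Type*} (X : Ω → A) (f : A → C) (c : C)
    (t : Finset A) (h1 : ∀ a ∈ t, f a = c)
    (h2 : ∀ a, 0 < dist p X a → f a = c → a ∈ t) :
    dist p (fun ω => f (X ω)) c = ∑ a ∈ t, dist p X a := by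
  classical
  rw [dist_comp]
  set u := (Finset.univ.image X).filter (fun a => f a = c) with hu
  have hzero : ∀ a, dist p X a = 0 ∨ 0 < dist p X a := fun a =>
    (lt_or_eq_of_le (dist_nonneg' hp0 X a)).symm.imp Eq.symm id
  rw [← Finset.sum_filter_ne_zero (s := u), ← Finset.sum_filter_ne_zero (s := t)]
  apply Finset.sum_congr _ (fun _ _ => rfl)
  ext a
  simp only [Finset.mem_filter]
  constructor
  · rintro ⟨hau, hane⟩
    have hpos : 0 < dist p X a := (hzero a).resolve_left hane
    exact ⟨h2 a hpos (Finset.mem_filter.1 hau).2, hane⟩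
  · rintro ⟨hat, hane⟩
    have hpos : 0 < dist p X a := (hzero a).resolve_left hane
    exact ⟨Finset.mem_filter.2 ⟨mem_image_of_dist_pos hpos, h1 a hat⟩, hane⟩

lemma exists_dist_pos (hp : IsProb p) {A : Type*} (X : Ω → A) :
    ∃ a, 0 < dist p X a := by
  obtain ⟨a, ha⟩ := Finset.exists_ne_zero_of_sum_ne_zero
    (by rw [sum_dist hp X]; norm_num :
      ∑ a ∈ Finset.univ.image X, dist p X a ≠ 0)
  exact ⟨a, lt_of_le_of_ne (dist_nonneg' hp.1 X a) (Ne.symm ha.2)⟩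

lemma sum_pair {α : Type*} (s : Finset α) (f : α → ℝ) (v : ℝ)
    (h0 : ∀ x ∈ s, f x = 0 ∨ f x = v)
    (huniq : ∀ x ∈ s, ∀ y ∈ s, f x ≠ 0 → f y ≠ 0 → x = y) :
    ∑ x ∈ s, f x = 0 ∨ ∑ x ∈ s, f x = v := by
  by_cases h : ∀ x ∈ s, f x = 0
  · left; exact Finset.sum_eq_zero h
  · right
    push_neg at h
    obtain ⟨x₀, hx₀, hfx₀⟩ := h
    rw [Finset.sum_eq_single_of_mem x₀ hx₀ (fun y hy hne => by
      by_contra hfy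
      exact hne (huniq y hy x₀ hx₀ hfy hfx₀))]
    rcases h0 x₀ hx₀ with h | h
    · exact absurd h hfx₀
    · exact h

/-- rank of `m` within the finset `t` of naturals -/
def rk (t : Finset ℕ) (m : ℕ) : ℕ := (t.filter (fun x => x < m)).card

lemma rk_lt {t : Finset ℕ} {m : ℕ} (hm : m ∈ t) : rk t m < t.card := by
  have hsub : t.filter (fun x => x < m) ⊆ t.erase m := by
    intro x hx
    have := Finset.mem_filter.1 hx
    exact Finset.mem_erase.2 ⟨Nat.ne_of_lt this.2, this.1⟩
  calc rk t m ≤ (t.erase m).card := Finset.card_le_card hsub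
    _ < t.card := Finset.card_erase_lt_of_mem hm

lemma rk_strictMono {t : Finset ℕ} {m₁ m₂ : ℕ} (h1 : m₁ ∈ t) (h2 : m₂ ∈ t) (h : m₁ < m₂) :
    rk t m₁ < rk t m₂ := by
  apply Finset.card_lt_card
  constructor
  · intro x hx
    have := Finset.mem_filter.1 hx
    exact Finset.mem_filter.2 ⟨this.1, this.2.trans h⟩
  · intro hsub
    have := hsub (Finset.mem_filter.2 ⟨h1, h⟩)
    exact absurd (Finset.mem_filter.1 this).2 (lt_irrefl m₁)

lemma rk_injOn {t : Finset ℕ} {m₁ m₂ : ℕ} (h1 : m₁ ∈ t) (h2 : m₂ ∈ t)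
    (h : rk t m₁ = rk t m₂) : m₁ = m₂ := by
  rcases lt_trichotomy m₁ m₂ with hlt | heq | hgt
  · exact absurd h (ne_of_lt (rk_strictMono h1 h2 hlt))
  · exact heq
  · exact absurd h.symm (ne_of_lt (rk_strictMono h2 h1 hgt))

lemma rk_surj {t : Finset ℕ} {w : ℕ} (hw : w < t.card) : ∃ m ∈ t, rk t m = w := by
  have himg : t.image (rk t) = Finset.range t.card := by
    apply Finset.eq_of_subset_of_card_le
    · intro x hx
      obtain ⟨m, hm, rfl⟩ := Finset.mem_image.1 hx
      exact Finset.mem_range.2 (rk_lt hm)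
    · rw [Finset.card_range, Finset.card_image_of_injOn (fun a ha b hb => rk_injOn ha hb)]
  have : w ∈ t.image (rk t) := by rw [himg]; exact Finset.mem_range.2 hw
  obtain ⟨m, hm, hrm⟩ := Finset.mem_image.1 this
  exact ⟨m, hm, hrm⟩

end Aux

theorem quasi_uniform_exists_W
    {Ω A B : Type*} [Fintype Ω] (p : Ω → ℝ) (X : Ω → A) (Y : Ω → B)
    (hp : IsProb p)
    (hX : UniformOnSupport p X) (hY : UniformOnSupport p Y)
    (hXY : UniformOnSupport p (fun ω => (X ω, Y ω))) :
    ∃ (C : Type) (W : Ω → C),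
      entH p W = entH p (fun ω => (X ω, Y ω)) - entH p Y ∧
      entH p (fun ω => (X ω, Y ω, W ω)) - entH p (fun ω => (Y ω, W ω)) = 0 := by
  classical
  set XY : Ω → A × B := fun ω => (X ω, Y ω) with hXYdef
  set S : Finset (A × B) := supp p XY with hSdef
  set T : Finset B := supp p Y with hTdef
  have hd0 : ∀ ω, 0 ≤ p ω := hp.1
  have hdXY : ∀ q, dist p XY q = 0 ∨ dist p XY q = (S.card : ℝ)⁻¹ := by
    intro q
    by_cases h : 0 < dist p XY q
    · exact Or.inr (hXY q (mem_supp_iff.2 h))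
    · exact Or.inl (le_antisymm (not_lt.1 h) (dist_nonneg' hd0 XY q))
  have hdY : ∀ b, dist p Y b = 0 ∨ dist p Y b = (T.card : ℝ)⁻¹ := by
    intro b
    by_cases h : 0 < dist p Y b
    · exact Or.inr (hY b (mem_supp_iff.2 h))
    · exact Or.inl (le_antisymm (not_lt.1 h) (dist_nonneg' hd0 Y b))
  -- nonemptiness
  have hSne : S.Nonempty := by
    obtain ⟨q, hq⟩ := exists_dist_pos hp XY
    exact ⟨q, mem_supp_iff.2 hq⟩
  have hTne : T.Nonempty := by
    obtain ⟨b, hb⟩ := exists_dist_pos hp Y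
    exact ⟨b, mem_supp_iff.2 hb⟩
  have hScard : 0 < (S.card : ℝ) := by exact_mod_cast Finset.card_pos.2 hSne
  have hTcard : 0 < (T.card : ℝ) := by exact_mod_cast Finset.card_pos.2 hTne
  -- fibers
  set fibP : B → Finset (A × B) := fun b => S.filter (fun q => q.2 = b) with hfibPdef
  have hfib_sum : ∀ b : B, dist p Y b = ((fibP b).card : ℝ) * (S.card : ℝ)⁻¹ := by
    intro b
    have hc : dist p Y b = ∑ q ∈ fibP b, dist p XY q := by
      refine dist_comp' hd0 XY (fun q => q.2) b (fibP b)
        (fun q hq => (Finset.mem_filter.1 hq).2) ?_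
      intro q hqpos hqb
      exact Finset.mem_filter.2 ⟨mem_supp_iff.2 hqpos, hqb⟩
    rw [hc, Finset.sum_congr rfl (fun q hq => hXY q (Finset.mem_filter.1 hq).1),
      Finset.sum_const, nsmul_eq_mul]
  -- q ∈ S implies q.2 ∈ T
  have hsnd : ∀ q ∈ S, q.2 ∈ T := by
    intro q hq
    have hqpos : 0 < dist p XY q := mem_supp_iff.1 hq
    apply mem_supp_iff.2
    have hc : dist p Y q.2 = ∑ q' ∈ fibP q.2, dist p XY q' := by
      refine dist_comp' hd0 XY (fun q => q.2) q.2 (fibP q.2)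
        (fun q' hq' => (Finset.mem_filter.1 hq').2) ?_
      intro q' hq'pos hq'b
      exact Finset.mem_filter.2 ⟨mem_supp_iff.2 hq'pos, hq'b⟩
    rw [hc]
    apply Finset.sum_pos' (fun r _ => dist_nonneg' hd0 XY r)
    exact ⟨q, Finset.mem_filter.2 ⟨hq, rfl⟩, hqpos⟩
  -- fiber cardinality is constant, call it n
  obtain ⟨b₀, hb₀⟩ := hTne
  set n : ℕ := (fibP b₀).card with hndef
  have hfibcard : ∀ b ∈ T, (fibP b).card = n := by
    intro b hb
    have h1 := hfib_sum b
    have h2 := hfib_sum b₀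
    rw [hY b hb] at h1
    rw [hY b₀ hb₀] at h2
    have h3 : ((fibP b).card : ℝ) = ((fibP b₀).card : ℝ) :=
      mul_right_cancel₀ (inv_ne_zero (ne_of_gt hScard)) (h1.symm.trans h2)
    exact_mod_cast h3
  have hnpos : 0 < (n : ℝ) := by
    have h2 := hfib_sum b₀
    rw [hY b₀ hb₀, ← hndef] at h2
    by_contra hc
    push_neg at hc
    have hzero : (n : ℝ) = 0 := le_antisymm hc (by positivity)
    rw [hzero, zero_mul] at h2
    exact absurd h2.symm (by positivity)
  have hnT : (n : ℝ) * (T.card : ℝ) = (S.card : ℝ) := by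
    have h2 := hfib_sum b₀
    rw [hY b₀ hb₀, ← hndef] at h2
    field_simp at h2
    rw [← h2, ← hTdef]
    field_simp
  -- injective index on pairs in S
  set e : ↥S ≃ Fin (Fintype.card ↥S) := Fintype.equivFin ↥S with hedef
  set idx : A × B → ℕ := fun q => if h : q ∈ S then (e ⟨q, h⟩ : ℕ) else 0 with hidxdef
  have hidx_inj : ∀ q₁ ∈ S, ∀ q₂ ∈ S, idx q₁ = idx q₂ → q₁ = q₂ := by
    intro q₁ h₁ q₂ h₂ h
    rw [hidxdef] at h
    simp only [dif_pos h₁, dif_pos h₂] at h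
    exact Subtype.ext_iff.1 (e.injective (Fin.ext h))
  set fibN : B → Finset ℕ := fun b => (fibP b).image idx with hfibNdef
  have hfibN_card : ∀ b, (fibN b).card = (fibP b).card := by
    intro b
    apply Finset.card_image_of_injOn
    intro q₁ h₁ q₂ h₂ h
    exact hidx_inj q₁ (Finset.mem_filter.1 h₁).1 q₂ (Finset.mem_filter.1 h₂).1 h
  -- the rank function and W
  set r : A × B → ℕ := fun q => rk (fibN q.2) (idx q) with hrdef
  set W : Ω → ℕ := fun ω => r (XY ω) with hWdef
  -- injectivity of (q.2, r q) on S
  have hkey_inj : ∀ q₁ ∈ S, ∀ q₂ ∈ S, q₁.2 = q₂.2 → r q₁ = r q₂ → q₁ = q₂ := by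
    intro q₁ h₁ q₂ h₂ hsnd_eq hr_eq
    have hm₁ : idx q₁ ∈ fibN q₁.2 :=
      Finset.mem_image_of_mem idx (Finset.mem_filter.2 ⟨h₁, rfl⟩)
    have hm₂ : idx q₂ ∈ fibN q₁.2 := by
      rw [hsnd_eq]
      exact Finset.mem_image_of_mem idx (Finset.mem_filter.2 ⟨h₂, rfl⟩)
    have hrr : rk (fibN q₁.2) (idx q₁) = rk (fibN q₁.2) (idx q₂) := by
      rw [hrdef] at hr_eq
      simp only at hr_eq
      rw [hr_eq, hsnd_eq]
    exact hidx_inj q₁ h₁ q₂ h₂ (rk_injOn hm₁ hm₂ hrr)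
  -- distribution of W
  have hdW : ∀ w, dist p W w = 0 ∨ dist p W w = (n : ℝ)⁻¹ := by
    intro w
    have hcomp : dist p W w = ∑ q ∈ S.filter (fun q => r q = w), dist p XY q := by
      refine dist_comp' hd0 XY r w _ (fun q hq => (Finset.mem_filter.1 hq).2) ?_
      intro q hqpos hqr
      exact Finset.mem_filter.2 ⟨mem_supp_iff.2 hqpos, hqr⟩
    by_cases hall : S.filter (fun q => r q = w) = ∅
    · left; rw [hcomp, hall, Finset.sum_empty]
    · right
      obtain ⟨q₀, hq₀mem⟩ := Finset.nonempty_of_ne_empty hall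
      have hq₀f := Finset.mem_filter.1 hq₀mem
      have hq₀S : q₀ ∈ S := hq₀f.1
      have hq₀r : r q₀ = w := hq₀f.2
      have hw_lt : w < n := by
        have hmem : idx q₀ ∈ fibN q₀.2 :=
          Finset.mem_image_of_mem idx (Finset.mem_filter.2 ⟨hq₀S, rfl⟩)
        have hlt := rk_lt hmem
        rw [hfibN_card, hfibcard q₀.2 (hsnd q₀ hq₀S)] at hlt
        rw [← hq₀r]
        exact hlt
      have hcount : (S.filter (fun q => r q = w)).card = T.card := by
        apply Finset.card_bij (fun q _ => q.2)
        · intro q hq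
          exact hsnd q (Finset.mem_filter.1 hq).1
        · intro q₁ h₁ q₂ h₂ heq
          have m₁ := Finset.mem_filter.1 h₁
          have m₂ := Finset.mem_filter.1 h₂
          exact hkey_inj q₁ m₁.1 q₂ m₂.1 heq (m₁.2.trans m₂.2.symm)
        · intro b hb
          have hcard : w < (fibN b).card := by
            rw [hfibN_card, hfibcard b hb]; exact hw_lt
          obtain ⟨m, hm, hrm⟩ := rk_surj hcard
          obtain ⟨q', hq'mem, hq'idx⟩ := Finset.mem_image.1 hm
          have hq'f := Finset.mem_filter.1 hq'mem
          refine ⟨q', Finset.mem_filter.2 ⟨hq'f.1, ?_⟩, hq'f.2⟩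
          rw [hrdef]
          simp only
          rw [hq'f.2, hq'idx, hrm]
      rw [hcomp,
        Finset.sum_congr rfl (fun q hq => hXY q (Finset.mem_filter.1 hq).1),
        Finset.sum_const, nsmul_eq_mul, hcount]
      rw [← hnT, mul_inv]
      rw [mul_comm ((n:ℝ)⁻¹) _, ← mul_assoc, mul_inv_cancel₀ (ne_of_gt hTcard), one_mul]
  -- distribution of (Y, W)
  have hdYW : ∀ c, dist p (fun ω => (Y ω, W ω)) c = 0
      ∨ dist p (fun ω => (Y ω, W ω)) c = (S.card : ℝ)⁻¹ := by
    intro c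
    have hcomp : dist p (fun ω => (Y ω, W ω)) c
        = ∑ q ∈ S.filter (fun q => (q.2, r q) = c), dist p XY q := by
      refine dist_comp' hd0 XY (fun q => (q.2, r q)) c _
        (fun q hq => (Finset.mem_filter.1 hq).2) ?_
      intro q hqpos hqc
      exact Finset.mem_filter.2 ⟨mem_supp_iff.2 hqpos, hqc⟩
    rw [hcomp]
    apply sum_pair
    · intro q _; exact hdXY q
    · intro q₁ h₁ q₂ h₂ _ _
      have m₁ := Finset.mem_filter.1 h₁
      have m₂ := Finset.mem_filter.1 h₂
      have heq : (q₁.2, r q₁) = (q₂.2, r q₂) := m₁.2.trans m₂.2.symm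
      exact hkey_inj q₁ m₁.1 q₂ m₂.1 (Prod.ext_iff.1 heq).1 (Prod.ext_iff.1 heq).2
  -- distribution of (X, Y, W)
  have hdXYW : ∀ c, dist p (fun ω => (X ω, Y ω, W ω)) c = 0
      ∨ dist p (fun ω => (X ω, Y ω, W ω)) c = (S.card : ℝ)⁻¹ := by
    intro c
    have hcomp : dist p (fun ω => (X ω, Y ω, W ω)) c
        = ∑ q ∈ S.filter (fun q => (q.1, q.2, r q) = c), dist p XY q := by
      refine dist_comp' hd0 XY (fun q => (q.1, q.2, r q)) c _
        (fun q hq => (Finset.mem_filter.1 hq).2) ?_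
      intro q hqpos hqc
      exact Finset.mem_filter.2 ⟨mem_supp_iff.2 hqpos, hqc⟩
    rw [hcomp]
    apply sum_pair
    · intro q _; exact hdXY q
    · intro q₁ h₁ q₂ h₂ _ _
      have m₁ := Finset.mem_filter.1 h₁
      have m₂ := Finset.mem_filter.1 h₂
      have heq : (q₁.1, q₁.2, r q₁) = (q₂.1, q₂.2, r q₂) := m₁.2.trans m₂.2.symm
      have h1 : q₁.1 = q₂.1 := (Prod.ext_iff.1 heq).1
      have h2 : q₁.2 = q₂.2 := (Prod.ext_iff.1 (Prod.ext_iff.1 heq).2).1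
      exact Prod.ext h1 h2
  -- entropies
  have eW : entH p W = Real.logb 2 n := entH_of_uniform hp W n hdW
  have eXY : entH p XY = Real.logb 2 S.card := entH_of_uniform hp XY S.card hdXY
  have eY : entH p Y = Real.logb 2 T.card := entH_of_uniform hp Y T.card hdY
  have eYW : entH p (fun ω => (Y ω, W ω)) = Real.logb 2 S.card :=
    entH_of_uniform hp _ S.card hdYW
  have eXYW : entH p (fun ω => (X ω, Y ω, W ω)) = Real.logb 2 S.card :=
    entH_of_uniform hp _ S.card hdXYW
  refine ⟨ℕ, W, ?_, ?_⟩
  · rw [eW, eXY, eY]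
    have h : Real.logb 2 (S.card : ℝ) = Real.logb 2 ((n : ℝ) * (T.card : ℝ)) := by rw [hnT]
    rw [h, Real.logb_mul (ne_of_gt hnpos) (ne_of_gt hTcard)]
    ring
  · rw [eXYW, eYW, sub_self]
end

section
/- Let V_s, s in S, be a finite family of subspaces of a finite-dimensional vector space. Define W_s = V_s ∩ span(V_j : j ≠ s) and A = span(W_s : s in S). Then dim(span(V_s : s in S)) − dim A = Σ_{s in S} (dim(span(V_s, A)) − dim A), i.e., the images T_A(V_s) have dimensions summing to the dimension of their joint span; moreover dim A = dim(span(V_s : s in S)) − Σ_{s in S} (dim(span(V_s : s in S)) − dim(span(V_j : j ≠ s))). -/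
open Module Submodule

-- auxiliary: finrank of a finite sup of "independent" submodules is the sum
lemma aux_finrank_sup {F Q : Type*} [Field F] [AddCommGroup Q] [Module F Q]
    [FiniteDimensional F Q] {S : Type*} [DecidableEq S] (P : S → Submodule F Q)
    (h : ∀ s, Disjoint (P s) (⨆ j, ⨆ _ : j ≠ s, P j)) (t : Finset S) :
    Module.finrank F ↥(t.sup P) = ∑ s ∈ t, Module.finrank F ↥(P s) := by
  induction t using Finset.induction_on with
  | empty => simp
  | @insert a t ha ih =>
    rw [Finset.sup_insert, Finset.sum_insert ha, ← ih]
    have hle : t.sup P ≤ ⨆ j, ⨆ _ : j ≠ a, P j :=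
      Finset.sup_le fun j hj => le_iSup_of_le j (le_iSup_of_le (by rintro rfl; exact ha hj) le_rfl)
    have hd : P a ⊓ t.sup P = ⊥ := ((h a).mono_right hle).eq_bot
    have := Submodule.finrank_sup_add_finrank_inf_eq (P a) (t.sup P)
    rw [hd] at this
    simp only [finrank_bot, add_zero] at this
    omega

-- finrank of image under mkQ
lemma aux_finrank_map_mkQ {F M : Type*} [Field F] [AddCommGroup M] [Module F M]
    [FiniteDimensional F M] (A p : Submodule F M) :
    Module.finrank F ↥(p.map A.mkQ) + Module.finrank F ↥(p ⊓ A) = Module.finrank F ↥p := by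
  have hker : LinearMap.ker (A.mkQ.comp p.subtype) = comap p.subtype (p ⊓ A) := by
    ext x
    simp [LinearMap.mem_ker, Submodule.mem_comap, Submodule.mem_inf, x.2]
  have hrange : LinearMap.range (A.mkQ.comp p.subtype) = p.map A.mkQ := by
    rw [LinearMap.range_comp, Submodule.range_subtype]
  have h := LinearMap.finrank_range_add_finrank_ker (A.mkQ.comp p.subtype)
  rw [hrange, hker] at h
  rwa [(Submodule.comapSubtypeEquivOfLe (inf_le_left : p ⊓ A ≤ p)).finrank_eq] at h

theorem independence_after_quotienting_common_part
    {F M : Type*} [Field F] [AddCommGroup M] [Module F M] [FiniteDimensional F M]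
    {S : Type*} [Fintype S]
    (V : S → Submodule F M)
    (W : S → Submodule F M) (hW : ∀ s, W s = V s ⊓ ⨆ j, ⨆ _ : j ≠ s, V j)
    (A : Submodule F M) (hA : A = ⨆ s, W s) :
    (Module.finrank F ↥(⨆ s, V s) : ℤ) - Module.finrank F A
        = ∑ s : S, ((Module.finrank F ↥(V s ⊔ A) : ℤ) - Module.finrank F A) ∧
    (Module.finrank F A : ℤ)
        = (Module.finrank F ↥(⨆ s, V s) : ℤ)
          - ∑ s : S, ((Module.finrank F ↥(⨆ j, V j) : ℤ)
              - Module.finrank F ↥(⨆ j, ⨆ _ : j ≠ s, V j)) := by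
  classical
  set U : S → Submodule F M := fun s => ⨆ j, ⨆ _ : j ≠ s, V j with hU
  have hWV : ∀ s, W s ≤ V s := fun s => (hW s) ▸ inf_le_left
  have hWU : ∀ s, W s ≤ U s := fun s => (hW s) ▸ inf_le_right
  have hAU : ∀ s, A ≤ U s := by
    intro s
    rw [hA]
    refine iSup_le fun j => ?_
    rcases eq_or_ne j s with rfl | hjs
    · exact hWU j
    · exact le_trans (hWV j) (le_iSup_of_le j (le_iSup_of_le hjs le_rfl))
  have hWA : ∀ s, W s ≤ A := fun s => hA ▸ le_iSup W s
  have hAV : A ≤ ⨆ s, V s := hA ▸ iSup_le fun s => (hWV s).trans (le_iSup V s)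
  have hVsup : ∀ s, V s ⊔ U s = ⨆ j, V j := by
    intro s
    apply le_antisymm
    · exact sup_le (le_iSup V s) (iSup_le fun j => iSup_le fun _ => le_iSup V j)
    · refine iSup_le fun j => ?_
      rcases eq_or_ne j s with rfl | hjs
      · exact le_sup_left
      · exact le_trans (le_iSup₂ (f := fun j (_ : j ≠ s) => V j) j hjs) le_sup_right
  have hVA : ∀ s, V s ⊓ A = W s := fun s =>
    le_antisymm ((inf_le_inf_left _ (hAU s)).trans (hW s).ge) (le_inf (hWV s) (hWA s))
  -- images in the quotient
  set P : S → Submodule F (M ⧸ A) := fun s => (V s).map A.mkQ with hP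
  have hPU : ∀ s, (⨆ j, ⨆ _ : j ≠ s, P j) = (U s).map A.mkQ := by
    intro s
    simp only [hU, Submodule.map_iSup]
    rfl
  have hdisj : ∀ s, Disjoint (P s) (⨆ j, ⨆ _ : j ≠ s, P j) := by
    intro s
    rw [disjoint_iff, eq_bot_iff, hPU]
    rintro x hx
    rw [Submodule.mem_inf] at hx
    obtain ⟨⟨v, hv, rfl⟩, hx2⟩ := hx
    obtain ⟨u, hu, huv⟩ := hx2
    have hvu : u - v ∈ A := by
      rw [← Submodule.Quotient.eq A]
      exact huv
    have hvU : v ∈ U s := by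
      rw [(sub_sub_cancel u v).symm]
      exact Submodule.sub_mem _ hu (hAU s hvu)
    have hvA : v ∈ A := hWA s ((hW s ▸ Submodule.mem_inf.mpr ⟨hv, hvU⟩))
    simpa [Submodule.mem_bot, Submodule.Quotient.mk_eq_zero] using
      (Submodule.Quotient.mk_eq_zero A).mpr hvA
  -- sum formula in the quotient
  have hsum : Module.finrank F ↥((⨆ s, V s).map A.mkQ) = ∑ s : S, Module.finrank F ↥(P s) := by
    rw [Submodule.map_iSup, ← Finset.sup_univ_eq_iSup]
    exact aux_finrank_sup P hdisj Finset.univ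
  -- translate to ambient dims
  have hmap : ∀ p : Submodule F M, (Module.finrank F ↥(p.map A.mkQ) : ℤ)
      = Module.finrank F ↥p - Module.finrank F ↥(p ⊓ A) := by
    intro p
    have := aux_finrank_map_mkQ A p
    omega
  have hVsupA : (⨆ s, V s) ⊓ A = A := inf_eq_right.mpr hAV
  have key : (Module.finrank F ↥(⨆ s, V s) : ℤ) - Module.finrank F A
      = ∑ s : S, ((Module.finrank F ↥(V s) : ℤ) - Module.finrank F ↥(W s)) := by
    have h1 := hmap (⨆ s, V s)
    rw [hVsupA] at h1
    rw [← h1, hsum]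
    push_cast
    refine Finset.sum_congr rfl fun s _ => ?_
    rw [hmap (V s), hVA s]
  have term1 : ∀ s : S, (Module.finrank F ↥(V s ⊔ A) : ℤ) - Module.finrank F A
      = (Module.finrank F ↥(V s) : ℤ) - Module.finrank F ↥(W s) := by
    intro s
    have := Submodule.finrank_sup_add_finrank_inf_eq (V s) A
    rw [hVA s] at this
    omega
  have term2 : ∀ s : S, (Module.finrank F ↥(⨆ j, V j) : ℤ) - Module.finrank F ↥(U s)
      = (Module.finrank F ↥(V s) : ℤ) - Module.finrank F ↥(W s) := by
    intro s
    have := Submodule.finrank_sup_add_finrank_inf_eq (V s) (U s)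
    rw [← hW s, hVsup s] at this
    omega
  constructor
  · rw [key]
    exact Finset.sum_congr rfl fun s _ => (term1 s).symm
  · have h2 : ∑ s : S, ((Module.finrank F ↥(⨆ j, V j) : ℤ)
          - Module.finrank F ↥(⨆ j, ⨆ _ : j ≠ s, V j))
        = ∑ s : S, ((Module.finrank F ↥(V s) : ℤ) - Module.finrank F ↥(W s)) :=
      Finset.sum_congr rfl fun s _ => term2 s
    rw [h2]
    linarith [key]
end
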